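/- Let n, d ≥ 1 be integers, let R be a rank matrix, and let k ∈ (0, n] be a real number. Then for every x ∈ [0, n/k]^d, the empirical beta stable tail dependence function satisfies max(x_1, …, x_d) ≤ ℓ^β_{n,k}(x) ≤ x_1 + ⋯ + x_d. -/

import Mathlib

/-- Distribution function of the Beta(r, n-r+1) distribution, i.e. the upper
binomial tail `F_{n,r}(u) = Σ_{s=r}^{n} (n choose s) u^s (1-u)^{n-s}`. -/
noncomputable def Fbeta (n r : ℕ) (u : ℝ) : ℝ :=
  ∑ s ∈ Finset.Icc r n, (n.choose s : ℝ) * u ^ s * (1 - u) ^ (n - s)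

/-- The empirical beta copula built from the rank matrix `R`. -/
noncomputable def empBetaCopula (n d : ℕ) (R : Fin n → Fin d → ℕ)
    (u : Fin d → ℝ) : ℝ :=
  (1 / (n : ℝ)) * ∑ i : Fin n, ∏ j : Fin d, Fbeta n (R i j) (u j)

/-- The empirical beta stable tail dependence function. -/
noncomputable def empBetaStdf (n d : ℕ) (R : Fin n → Fin d → ℕ) (k : ℝ)
    (x : Fin d → ℝ) : ℝ :=
  ((n : ℝ) / k) * (1 - empBetaCopula n d R (fun j => 1 - (k / n) * x j))

lemma sum_binom_one (n : ℕ) (u : ℝ) : ∑ s ∈ Finset.range (n+1),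
      (n.choose s : ℝ) * u ^ s * (1 - u) ^ (n - s) = 1 := by
  have h := add_pow u (1-u) n
  rw [show u + (1-u) = 1 by ring, one_pow] at h
  have key : ∑ s ∈ Finset.range (n+1), (n.choose s : ℝ) * u ^ s * (1 - u) ^ (n - s)
      = ∑ s ∈ Finset.range (n+1), u ^ s * (1 - u) ^ (n - s) * (n.choose s : ℝ) :=
    Finset.sum_congr rfl fun s _ => by ring
  rw [key]; exact h.symm

lemma Fbeta_nonneg (n r : ℕ) {u : ℝ} (h0 : 0 ≤ u) (h1 : u ≤ 1) :
    0 ≤ Fbeta n r u := by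
  apply Finset.sum_nonneg
  intro s _
  have : (0:ℝ) ≤ 1 - u := by linarith
  positivity

lemma Fbeta_le_one (n r : ℕ) {u : ℝ} (h0 : 0 ≤ u) (h1 : u ≤ 1) :
    Fbeta n r u ≤ 1 := by
  have hsub : Finset.Icc r n ⊆ Finset.range (n+1) := by
    intro s hs
    simp only [Finset.mem_Icc] at hs
    simp only [Finset.mem_range]; omega
  have h2 : Fbeta n r u ≤ ∑ s ∈ Finset.range (n+1),
      (n.choose s : ℝ) * u ^ s * (1 - u) ^ (n - s) := by
    apply Finset.sum_le_sum_of_subset_of_nonneg hsub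
    intro s _ _
    have : (0:ℝ) ≤ 1 - u := by linarith
    positivity
  rw [sum_binom_one] at h2
  exact h2

/-- Binomial mean identity. -/
lemma sum_mean (m : ℕ) (u : ℝ) :
    ∑ s ∈ Finset.Icc 1 (m+1),
      (s : ℝ) * ((((m+1).choose s : ℝ)) * u ^ s * (1 - u) ^ (m+1 - s))
      = (m+1 : ℝ) * u := by
  rw [show Finset.Icc 1 (m+1) = Finset.Ico 1 (m+1+1) by
    ext t; simp only [Finset.mem_Icc, Finset.mem_Ico]; omega, Finset.sum_Ico_eq_sum_range]
  have hcard : m + 1 + 1 - 1 = m + 1 := by omega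
  rw [hcard]
  have key : ∀ i ∈ Finset.range (m+1),
      ((1+i : ℕ) : ℝ) * ((((m+1).choose (1+i) : ℝ)) * u ^ (1+i) * (1 - u) ^ (m+1 - (1+i)))
      = ((m+1 : ℕ) : ℝ) * u * ((m.choose i : ℝ) * u ^ i * (1 - u) ^ (m - i)) := by
    intro i hi
    have hch' : ((m+1 : ℕ) : ℝ) * (m.choose i : ℝ)
        = (((m+1).choose (i+1) : ℕ) : ℝ) * ((i+1 : ℕ) : ℝ) := by
      exact_mod_cast congrArg (Nat.cast : ℕ → ℝ) (Nat.add_one_mul_choose_eq m i)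
    have he : m + 1 - (1 + i) = m - i := by omega
    have hi1 : (1 : ℕ) + i = i + 1 := by omega
    rw [he, hi1]
    push_cast
    push_cast at hch'
    linear_combination (-(u ^ (i+1) * (1-u) ^ (m-i))) * hch'
  rw [Finset.sum_congr rfl key, ← Finset.mul_sum, sum_binom_one]
  push_cast; ring

/-- Sum of `Fbeta n r u` over all ranks `r ∈ Icc 1 n` equals `n * u`. -/
lemma sum_Fbeta_Icc (n : ℕ) (hn : 1 ≤ n) (u : ℝ) :
    ∑ r ∈ Finset.Icc 1 n, Fbeta n r u = (n : ℝ) * u := by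
  obtain ⟨m, rfl⟩ : ∃ m, n = m + 1 := ⟨n - 1, by omega⟩
  unfold Fbeta
  rw [Finset.sum_comm' (t' := Finset.Icc 1 (m+1)) (s' := fun s => Finset.Icc 1 s)
    (by intro r s; simp only [Finset.mem_Icc]; omega)]
  have : ∀ s ∈ Finset.Icc 1 (m+1),
      ∑ _r ∈ Finset.Icc 1 s, (((m+1).choose s : ℝ)) * u ^ s * (1 - u) ^ (m+1 - s)
      = (s : ℝ) * ((((m+1).choose s : ℝ)) * u ^ s * (1 - u) ^ (m+1 - s)) := by
    intro s _
    rw [Finset.sum_const, Nat.card_Icc]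
    simp only [Nat.add_sub_cancel, nsmul_eq_mul]
  rw [Finset.sum_congr rfl this, sum_mean]
  push_cast; ring

/-- Weierstrass-type inequality. -/
lemma one_sub_sum_le_prod {ι : Type*} (s : Finset ι) (g : ι → ℝ)
    (h0 : ∀ i ∈ s, 0 ≤ g i) (h1 : ∀ i ∈ s, g i ≤ 1) :
    1 - ∑ i ∈ s, (1 - g i) ≤ ∏ i ∈ s, g i := by
  induction s using Finset.cons_induction with
  | empty => simp
  | cons a s ha ih =>
    rw [Finset.sum_cons, Finset.prod_cons]
    have h0' : ∀ i ∈ s, 0 ≤ g i := fun i hi => h0 i (Finset.mem_cons_of_mem hi)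
    have h1' : ∀ i ∈ s, g i ≤ 1 := fun i hi => h1 i (Finset.mem_cons_of_mem hi)
    have hih := ih h0' h1'
    have hp0 : 0 ≤ ∏ i ∈ s, g i := Finset.prod_nonneg h0'
    have hp1 : (∏ i ∈ s, g i) ≤ 1 := Finset.prod_le_one h0' h1'
    have ha0 : 0 ≤ g a := h0 a (Finset.mem_cons_self a s)
    have ha1 : g a ≤ 1 := h1 a (Finset.mem_cons_self a s)
    nlinarith

theorem stmt0 (n d : ℕ) (hn : 1 ≤ n) (hd : 1 ≤ d)
    (R : Fin n → Fin d → ℕ)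
    (hRrange : ∀ i j, R i j ∈ Finset.Icc 1 n)
    (hRperm : ∀ j : Fin d, Function.Injective fun i : Fin n => R i j)
    (k : ℝ) (hk0 : 0 < k) (hkn : k ≤ n)
    (x : Fin d → ℝ) (hx : ∀ j, x j ∈ Set.Icc (0 : ℝ) ((n : ℝ) / k)) :
    (∀ j, x j ≤ empBetaStdf n d R k x) ∧
      empBetaStdf n d R k x ≤ ∑ j : Fin d, x j := by
  have hnpos : (0:ℝ) < n := by exact_mod_cast Nat.pos_of_ne_zero (by omega)
  set u : Fin d → ℝ := fun j => 1 - (k / n) * x j with hu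
  have hu0 : ∀ j, 0 ≤ u j := by
    intro j
    have hx2 := (hx j).2
    have : (k / n) * x j ≤ (k / n) * ((n:ℝ)/k) :=
      mul_le_mul_of_nonneg_left hx2 (by positivity)
    have heq : (k / n) * ((n:ℝ)/k) = 1 := by field_simp
    simp only [hu]; rw [heq] at this; linarith
  have hu1 : ∀ j, u j ≤ 1 := by
    intro j
    have hx1 := (hx j).1
    have : 0 ≤ (k / n) * x j := by positivity
    simp only [hu]; linarith
  -- each Fbeta value in [0,1]
  have hF0 : ∀ i j, 0 ≤ Fbeta n (R i j) (u j) := fun i j =>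
    Fbeta_nonneg n _ (hu0 j) (hu1 j)
  have hF1 : ∀ i j, Fbeta n (R i j) (u j) ≤ 1 := fun i j =>
    Fbeta_le_one n _ (hu0 j) (hu1 j)
  -- marginal identity
  have hmarg : ∀ j : Fin d, ∑ i : Fin n, Fbeta n (R i j) (u j) = (n:ℝ) * u j := by
    intro j
    have himg : Finset.univ.image (fun i : Fin n => R i j) = Finset.Icc 1 n := by
      apply Finset.eq_of_subset_of_card_le
      · intro r hr
        simp only [Finset.mem_image, Finset.mem_univ, true_and] at hr
        obtain ⟨i, rfl⟩ := hr
        exact hRrange i j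
      · rw [Finset.card_image_of_injective _ (hRperm j)]
        simp [Nat.card_Icc]
    calc ∑ i : Fin n, Fbeta n (R i j) (u j)
        = ∑ r ∈ Finset.univ.image (fun i : Fin n => R i j), Fbeta n r (u j) := by
          rw [Finset.sum_image (fun a _ b _ hab => hRperm j hab)]
      _ = ∑ r ∈ Finset.Icc 1 n, Fbeta n r (u j) := by rw [himg]
      _ = (n:ℝ) * u j := sum_Fbeta_Icc n hn (u j)
  have hC : empBetaCopula n d R u
      = (1 / (n : ℝ)) * ∑ i : Fin n, ∏ j : Fin d, Fbeta n (R i j) (u j) := rfl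
  have hstdf : empBetaStdf n d R k x = ((n:ℝ)/k) * (1 - empBetaCopula n d R u) := rfl
  constructor
  · intro j0
    -- product ≤ single factor
    have hprod_le : ∀ i : Fin n, (∏ j : Fin d, Fbeta n (R i j) (u j))
        ≤ Fbeta n (R i j0) (u j0) := by
      intro i
      rw [← Finset.mul_prod_erase _ _ (Finset.mem_univ j0)]
      have : (∏ j ∈ Finset.univ.erase j0, Fbeta n (R i j) (u j)) ≤ 1 :=
        Finset.prod_le_one (fun j _ => hF0 i j) (fun j _ => hF1 i j)
      calc Fbeta n (R i j0) (u j0) * ∏ j ∈ Finset.univ.erase j0, Fbeta n (R i j) (u j)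
          ≤ Fbeta n (R i j0) (u j0) * 1 :=
            mul_le_mul_of_nonneg_left this (hF0 i j0)
        _ = Fbeta n (R i j0) (u j0) := mul_one _
    have hS : (∑ i : Fin n, ∏ j : Fin d, Fbeta n (R i j) (u j))
        ≤ (n:ℝ) * u j0 := by
      rw [← hmarg j0]
      exact Finset.sum_le_sum fun i _ => hprod_le i
    have hCle : empBetaCopula n d R u ≤ u j0 := by
      rw [hC]
      rw [div_mul_eq_mul_div, one_mul, div_le_iff₀ hnpos, mul_comm (u j0) _]
      exact hS
    have huj0 : 1 - u j0 = (k/n) * x j0 := by simp [hu]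
    rw [hstdf]
    have h1 : (k/n) * x j0 ≤ 1 - empBetaCopula n d R u := by
      have := hCle; rw [← huj0]; linarith
    calc x j0 = ((n:ℝ)/k) * ((k/n) * x j0) := by field_simp
      _ ≤ ((n:ℝ)/k) * (1 - empBetaCopula n d R u) :=
        mul_le_mul_of_nonneg_left h1 (by positivity)
  · -- upper bound
    have hweier : ∀ i : Fin n, 1 - (∏ j : Fin d, Fbeta n (R i j) (u j))
        ≤ ∑ j : Fin d, (1 - Fbeta n (R i j) (u j)) := by
      intro i
      have := one_sub_sum_le_prod Finset.univ (fun j => Fbeta n (R i j) (u j))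
        (fun j _ => hF0 i j) (fun j _ => hF1 i j)
      linarith
    have hsum : ∑ i : Fin n, (1 - ∏ j : Fin d, Fbeta n (R i j) (u j))
        ≤ ∑ i : Fin n, ∑ j : Fin d, (1 - Fbeta n (R i j) (u j)) :=
      Finset.sum_le_sum fun i _ => hweier i
    have hswap : ∑ i : Fin n, ∑ j : Fin d, (1 - Fbeta n (R i j) (u j))
        = ∑ j : Fin d, ((n:ℝ) - (n:ℝ) * u j) := by
      rw [Finset.sum_comm]
      apply Finset.sum_congr rfl
      intro j _
      rw [Finset.sum_sub_distrib, hmarg j]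
      simp [Finset.card_univ]
    have hsum1 : ∑ i : Fin n, (1 - ∏ j : Fin d, Fbeta n (R i j) (u j))
        = (n:ℝ) - (∑ i : Fin n, ∏ j : Fin d, Fbeta n (R i j) (u j)) := by
      rw [Finset.sum_sub_distrib]
      simp [Finset.card_univ]
    have hxu : ∀ j, (n:ℝ) - (n:ℝ) * u j = k * x j := by
      intro j
      simp only [hu]
      field_simp
      ring
    have hfinal : (n:ℝ) - (∑ i : Fin n, ∏ j : Fin d, Fbeta n (R i j) (u j))
        ≤ ∑ j : Fin d, k * x j := by
      rw [← hsum1]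
      calc _ ≤ ∑ i : Fin n, ∑ j : Fin d, (1 - Fbeta n (R i j) (u j)) := hsum
        _ = ∑ j : Fin d, ((n:ℝ) - (n:ℝ) * u j) := hswap
        _ = ∑ j : Fin d, k * x j := Finset.sum_congr rfl fun j _ => hxu j
    rw [hstdf, hC]
    have hexp : ((n:ℝ)/k) * (1 - (1 / (n : ℝ)) * ∑ i : Fin n, ∏ j : Fin d, Fbeta n (R i j) (u j))
        = (1/k) * ((n:ℝ) - ∑ i : Fin n, ∏ j : Fin d, Fbeta n (R i j) (u j)) := by
      field_simp
    rw [hexp]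
    calc (1/k) * ((n:ℝ) - ∑ i : Fin n, ∏ j : Fin d, Fbeta n (R i j) (u j))
        ≤ (1/k) * ∑ j : Fin d, k * x j :=
          mul_le_mul_of_nonneg_left hfinal (by positivity)
      _ = ∑ j : Fin d, x j := by
          rw [← Finset.mul_sum, ← mul_assoc]
          rw [show (1/k) * k = 1 by field_simp, one_mul]
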